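/- arXiv:2405.15735 — 4 statements merged into one kernel-verified Lean document; each statement's English description precedes it below -/
import Mathlib

section
/- Let A and B be real symmetric n×n matrices with B positive definite, let P be an injective linear map from ℝ^m to ℝⁿ (m ≤ n), and set A_V := PᵀAP and B_V := PᵀBP, which is again symmetric with B_V positive definite. Let λ₁ ≤ … ≤ λ_n be the generalized eigenvalues of (A,B) and μ₁ ≤ … ≤ μ_m those of (A_V,B_V). Then for every ℓ ∈ {1,…,m}, λ_ℓ ≤ μ_ℓ. -/
open Matrix
open scoped RealInnerProductSpace

open scoped ComplexOrder in
/-- The positive semidefinite square root of a positive semidefinite matrix (as defined in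
Mathlib of December 2024; since removed from Mathlib). -/
noncomputable def Matrix.PosSemidef.sqrt {n : Type*} [Fintype n] [DecidableEq n]
    {𝕜 : Type*} [RCLike 𝕜] {A : Matrix n n 𝕜} (hA : A.PosSemidef) : Matrix n n 𝕜 :=
  hA.1.eigenvectorUnitary.1 * diagonal ((↑) ∘ (Real.sqrt ∘ hA.1.eigenvalues)) *
    (star hA.1.eigenvectorUnitary : Matrix n n 𝕜)

open scoped ComplexOrder in
theorem Matrix.PosSemidef.sqrt_mul_self {n : Type*} [Fintype n] [DecidableEq n]
    {𝕜 : Type*} [RCLike 𝕜] {A : Matrix n n 𝕜} (hA : A.PosSemidef) : hA.sqrt * hA.sqrt = A := by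
  have hU : (star hA.1.eigenvectorUnitary : Matrix n n 𝕜) * hA.1.eigenvectorUnitary = 1 :=
    Unitary.coe_star_mul_self _
  have hD : diagonal ((↑) ∘ (Real.sqrt ∘ hA.1.eigenvalues)) *
      diagonal ((↑) ∘ (Real.sqrt ∘ hA.1.eigenvalues)) =
      diagonal (RCLike.ofReal ∘ hA.1.eigenvalues : n → 𝕜) := by
    rw [diagonal_mul_diagonal]
    congr 1
    funext i
    simp only [Function.comp_apply]
    rw [← RCLike.ofReal_mul, Real.mul_self_sqrt (hA.eigenvalues_nonneg i)]
  unfold Matrix.PosSemidef.sqrt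
  conv_rhs => rw [hA.1.spectral_theorem, Unitary.conjStarAlgAut_apply]
  rw [← hD]
  simp only [Matrix.mul_assoc]
  rw [← Matrix.mul_assoc (star _ : Matrix n n 𝕜) _ _, hU, Matrix.one_mul]

open scoped ComplexOrder in
theorem Matrix.PosSemidef.isHermitian_sqrt {n : Type*} [Fintype n] [DecidableEq n]
    {𝕜 : Type*} [RCLike 𝕜] {A : Matrix n n 𝕜} (hA : A.PosSemidef) : hA.sqrtᴴ = hA.sqrt := by
  unfold Matrix.PosSemidef.sqrt
  simp [conjTranspose_mul, diagonal_conjTranspose, Matrix.mul_assoc]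
  simp only [star_eq_conjTranspose, conjTranspose_conjTranspose]
  congr 3
  funext i
  simp


private theorem galerkin_mulVec_dot {n m : ℕ} (M : Matrix (Fin n) (Fin m) ℝ) (z : Fin m → ℝ)
    (u : Fin n → ℝ) : M.mulVec z ⬝ᵥ u = z ⬝ᵥ Mᵀ.mulVec u := by
  rw [dotProduct_mulVec, vecMul_transpose]

private theorem galerkin_inner_dot {N : ℕ} (x y : EuclideanSpace ℝ (Fin N)) :
    (⟪x, y⟫ : ℝ) = x ⬝ᵥ y := by
  simp [PiLp.inner_apply, dotProduct, mul_comm]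

private theorem quadRepr {N : ℕ} {κ : Type*} [Fintype κ]
    (b : OrthonormalBasis (Fin N) ℝ (EuclideanSpace ℝ (Fin N)))
    (f : Fin N → ℝ) (C : Matrix (Fin N) (Fin N) ℝ)
    (hCb : ∀ i, C.mulVec ⇑(b i) = f i • ⇑(b i))
    (g : κ → Fin N) (hg : Function.Injective g)
    (y : EuclideanSpace ℝ (Fin N))
    (hy : y ∈ Submodule.span ℝ (Set.range fun j => b (g j))) :
    ∃ c : κ → ℝ, (⟪y, y⟫ : ℝ) = ∑ j, c j ^ 2 ∧
      ⟪y, (WithLp.toLp 2 (C.mulVec y) : EuclideanSpace ℝ (Fin N))⟫ = ∑ j, f (g j) * c j ^ 2 := by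
  obtain ⟨c, hc⟩ := (Submodule.mem_span_range_iff_exists_fun ℝ).mp hy
  have horth : Orthonormal ℝ (fun j => b (g j)) := b.orthonormal.comp g hg
  have key : ∀ d : κ → ℝ,
      (⟪y, ∑ j, d j • b (g j)⟫ : ℝ) = ∑ j, c j * d j := by
    intro d
    rw [inner_sum]
    refine Finset.sum_congr rfl fun j _ => ?_
    rw [real_inner_smul_right, ← hc, horth.inner_left_fintype]
    simp [mul_comm]
  refine ⟨c, ?_, ?_⟩
  · have := key c
    rw [hc] at this
    simpa [sq] using this
  · have h2 : (WithLp.toLp 2 (C.mulVec y) : EuclideanSpace ℝ (Fin N)) = ∑ j, (f (g j) * c j) • b (g j) := by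
      have hy' : ⇑y = ∑ j, c j • ⇑(b (g j)) := by rw [← hc, WithLp.ofLp_sum]; rfl
      have : C.mulVec y = C.mulVecLin (∑ j, c j • ⇑(b (g j))) := by
        rw [← hy']; rfl
      rw [this, map_sum, WithLp.toLp_sum]
      refine Finset.sum_congr rfl fun j _ => ?_
      rw [_root_.map_smul, mulVecLin_apply, hCb, smul_smul, mul_comm]; rfl
    rw [h2, key]
    refine Finset.sum_congr rfl fun j _ => ?_
    ring

/-- **Galerkin monotonicity of generalized eigenvalues.**
Let `A, B` be real symmetric `n×n` with `B` positive definite, let `P : ℝ^m → ℝ^n`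
be injective (`m ≤ n`), and set `A_V = PᵀAP`, `B_V = PᵀBP` (symmetric, with `B_V`
positive definite).  If `λ₁ ≤ … ≤ λ_n` are the generalized eigenvalues of `(A,B)` and
`μ₁ ≤ … ≤ μ_m` those of `(A_V, B_V)`, then `λ_ℓ ≤ μ_ℓ` for every `ℓ ∈ {1,…,m}`. -/
theorem pencil_galerkin_monotone {n m : ℕ} (hmn : m ≤ n)
    (A B : Matrix (Fin n) (Fin n) ℝ)
    (hA : A.IsSymm) (hB : B.PosDef)
    (P : Matrix (Fin n) (Fin m) ℝ) (hP : Function.Injective P.mulVec)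
    (hAV : (Pᵀ * A * P).IsSymm) (hBV : (Pᵀ * B * P).PosDef)
    (lam : Fin n → ℝ) (mu : Fin m → ℝ)
    (hlam_mono : Monotone lam) (hmu_mono : Monotone mu)
    (hC : ((hB.posSemidef.sqrt)⁻¹ * A * (hB.posSemidef.sqrt)⁻¹).IsHermitian)
    (hCV : ((hBV.posSemidef.sqrt)⁻¹ * (Pᵀ * A * P) * (hBV.posSemidef.sqrt)⁻¹).IsHermitian)
    (hlam_eig : ∃ σ : Equiv.Perm (Fin n), ∀ i, lam i = hC.eigenvalues (σ i))
    (hmu_eig : ∃ σ : Equiv.Perm (Fin m), ∀ i, mu i = hCV.eigenvalues (σ i)) :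
    ∀ ℓ : Fin m, lam (Fin.castLE hmn ℓ) ≤ mu ℓ := by
  obtain ⟨σ, hσ⟩ := hlam_eig
  obtain ⟨τ, hτ⟩ := hmu_eig
  intro ℓ
  set sB := hB.posSemidef.sqrt with hsBdef
  set sV := hBV.posSemidef.sqrt with hsVdef
  have hsB2 : sB * sB = B := hB.posSemidef.sqrt_mul_self
  have hsV2 : sV * sV = Pᵀ * B * P := hBV.posSemidef.sqrt_mul_self
  have hsBt : sBᵀ = sB := by
    have h : sBᴴ = sB := hB.posSemidef.isHermitian_sqrt
    rwa [conjTranspose_eq_transpose_of_trivial] at h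
  have hsVt : sVᵀ = sV := by
    have h : sVᴴ = sV := hBV.posSemidef.isHermitian_sqrt
    rwa [conjTranspose_eq_transpose_of_trivial] at h
  have hsBdet : IsUnit sB.det := by
    have hmul : sB.det * sB.det = B.det := by rw [← det_mul, hsB2]
    refine isUnit_iff_ne_zero.mpr fun h0 => ?_
    rw [h0, mul_zero] at hmul
    exact hB.det_pos.ne' hmul.symm
  have hsVdet : IsUnit sV.det := by
    have hmul : sV.det * sV.det = (Pᵀ * B * P).det := by rw [← det_mul, hsV2]
    refine isUnit_iff_ne_zero.mpr fun h0 => ?_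
    rw [h0, mul_zero] at hmul
    exact hBV.det_pos.ne' hmul.symm
  have hBinv1 : sB * sB⁻¹ = 1 := mul_nonsing_inv _ hsBdet
  have hBinv2 : sB⁻¹ * sB = 1 := nonsing_inv_mul _ hsBdet
  have hVinv1 : sV * sV⁻¹ = 1 := mul_nonsing_inv _ hsVdet
  have hVinv2 : sV⁻¹ * sV = 1 := nonsing_inv_mul _ hsVdet
  have hsVit : (sV⁻¹)ᵀ = sV⁻¹ := by rw [transpose_nonsing_inv, hsVt]
  set C : Matrix (Fin n) (Fin n) ℝ := sB⁻¹ * A * sB⁻¹ with hCdef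
  set CV : Matrix (Fin m) (Fin m) ℝ := sV⁻¹ * (Pᵀ * A * P) * sV⁻¹ with hCVdef
  set M : Matrix (Fin n) (Fin m) ℝ := sB * P * sV⁻¹ with hMdef
  have hMt : Mᵀ = sV⁻¹ * (Pᵀ * sB) := by
    rw [hMdef, transpose_mul, transpose_mul, hsVit, hsBt]
  have hMM : Mᵀ * M = 1 := by
    rw [hMt, hMdef]
    have e1 : sV⁻¹ * (Pᵀ * sB) * (sB * P * sV⁻¹) = sV⁻¹ * (Pᵀ * (sB * sB) * P) * sV⁻¹ := by
      simp only [Matrix.mul_assoc]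
    rw [e1, hsB2, ← hsV2]
    have e2 : sV⁻¹ * (sV * sV) * sV⁻¹ = sV⁻¹ * sV * (sV * sV⁻¹) := by simp only [Matrix.mul_assoc]
    rw [e2, hVinv2, hVinv1, one_mul]
  have hMCM : Mᵀ * C * M = CV := by
    rw [hMt, hMdef, hCdef, hCVdef]
    have e3 : sV⁻¹ * (Pᵀ * sB) * (sB⁻¹ * A * sB⁻¹) * (sB * P * sV⁻¹)
        = sV⁻¹ * (Pᵀ * (sB * sB⁻¹ * A * (sB⁻¹ * sB)) * P) * sV⁻¹ := by simp only [Matrix.mul_assoc]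
    rw [e3, hBinv1, hBinv2, one_mul, mul_one]
  have hdotMM : ∀ z w : Fin m → ℝ, M.mulVec z ⬝ᵥ M.mulVec w = z ⬝ᵥ w := by
    intro z w
    rw [galerkin_mulVec_dot, mulVec_mulVec, hMM, one_mulVec]
  have hdotMCM : ∀ z w : Fin m → ℝ, M.mulVec z ⬝ᵥ C.mulVec (M.mulVec w) = z ⬝ᵥ CV.mulVec w := by
    intro z w
    rw [mulVec_mulVec, galerkin_mulVec_dot, mulVec_mulVec, ← Matrix.mul_assoc, hMCM]
  -- bases and families
  set bC := hC.eigenvectorBasis with hbCdef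
  set bV := hCV.eigenvectorBasis with hbVdef
  set ℓ' : Fin n := Fin.castLE hmn ℓ with hℓ'def
  have hℓlt : (ℓ : ℕ) < n := ℓ'.isLt
  set gY : Fin ((ℓ : ℕ) + 1) → Fin m := fun i => τ (Fin.castLE ℓ.isLt i) with hgYdef
  have hgY : Function.Injective gY := fun a b h => by
    have := τ.injective h
    exact Fin.castLE_injective _ this
  set vY : Fin ((ℓ : ℕ) + 1) → EuclideanSpace ℝ (Fin m) := fun i => bV (gY i) with hvYdef
  set uY : Fin ((ℓ : ℕ) + 1) → EuclideanSpace ℝ (Fin n) :=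
    fun i => (WithLp.toLp 2 (M.mulVec (vY i)) : EuclideanSpace ℝ (Fin n)) with huYdef
  have huYorth : Orthonormal ℝ uY := by
    rw [orthonormal_iff_ite]
    intro i j
    have hv := (orthonormal_iff_ite.mp (bV.orthonormal.comp gY hgY)) i j
    calc (⟪uY i, uY j⟫ : ℝ) = M.mulVec (vY i) ⬝ᵥ M.mulVec (vY j) :=
          galerkin_inner_dot (WithLp.toLp 2 (M.mulVec (vY i))) (WithLp.toLp 2 (M.mulVec (vY j)))
      _ = vY i ⬝ᵥ vY j := hdotMM _ _
      _ = ⟪vY i, vY j⟫ := (galerkin_inner_dot (vY i) (vY j)).symm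
      _ = if i = j then 1 else 0 := hv
  set gE : Set.Ici ℓ' → Fin n := fun i => σ i.1 with hgEdef
  have hgE : Function.Injective gE := fun a b h => Subtype.ext (σ.injective h)
  set uE : Set.Ici ℓ' → EuclideanSpace ℝ (Fin n) := fun i => bC (gE i) with huEdef
  have huEorth : Orthonormal ℝ uE := bC.orthonormal.comp gE hgE
  set Y : Submodule ℝ (EuclideanSpace ℝ (Fin n)) := Submodule.span ℝ (Set.range uY) with hYdef
  set E : Submodule ℝ (EuclideanSpace ℝ (Fin n)) := Submodule.span ℝ (Set.range uE) with hEdef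
  have hYr : Module.finrank ℝ Y = (ℓ : ℕ) + 1 := by
    rw [hYdef, finrank_span_eq_card huYorth.linearIndependent]
    simp
  have hEr : Module.finrank ℝ E = n - (ℓ : ℕ) := by
    rw [hEdef, finrank_span_eq_card huEorth.linearIndependent]
    rw [← Set.toFinset_card, Set.toFinset_Ici, Fin.card_Ici]
    rfl
  have hinf : Y ⊓ E ≠ ⊥ := by
    intro hbot
    have hsum := Submodule.finrank_sup_add_finrank_inf_eq Y E
    rw [hbot, finrank_bot, add_zero, hYr, hEr] at hsum
    have hle : Module.finrank ℝ ↥(Y ⊔ E) ≤ n := by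
      have := Submodule.finrank_le (Y ⊔ E)
      rwa [finrank_euclideanSpace_fin] at this
    omega
  obtain ⟨y, hy, hy0⟩ := Submodule.exists_mem_ne_zero_of_ne_bot hinf
  have hyY : y ∈ Y := (Submodule.mem_inf.mp hy).1
  have hyE : y ∈ E := (Submodule.mem_inf.mp hy).2
  obtain ⟨c, hc⟩ := (Submodule.mem_span_range_iff_exists_fun ℝ).mp hyY
  set z : EuclideanSpace ℝ (Fin m) := ∑ i, c i • vY i with hzdef
  have hzY : z ∈ Submodule.span ℝ (Set.range vY) :=
    Submodule.sum_mem _ fun i _ => Submodule.smul_mem _ _ (Submodule.subset_span ⟨i, rfl⟩)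
  have hyz : y = (WithLp.toLp 2 (M.mulVec z) : EuclideanSpace ℝ (Fin n)) := by
    rw [← hc, hzdef]
    rw [WithLp.ofLp_sum]
    show ∑ i, c i • uY i = WithLp.toLp 2 (M.mulVecLin (∑ i, c i • (vY i).ofLp))
    rw [map_sum, WithLp.toLp_sum]
    refine Finset.sum_congr rfl fun i _ => ?_
    rw [_root_.map_smul]
    rfl
  obtain ⟨d, hzz, hzCz⟩ := quadRepr bV hCV.eigenvalues CV
    (fun i => hCV.mulVec_eigenvectorBasis i) gY hgY z hzY
  have hmu_bound : (⟪z, (WithLp.toLp 2 (CV.mulVec z) : EuclideanSpace ℝ (Fin m))⟫ : ℝ) ≤ mu ℓ * ⟪z, z⟫ := by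
    rw [hzz, hzCz, Finset.mul_sum]
    refine Finset.sum_le_sum fun j _ => ?_
    have hb : hCV.eigenvalues (gY j) ≤ mu ℓ := by
      have h1 : hCV.eigenvalues (gY j) = mu (Fin.castLE ℓ.isLt j) := (hτ _).symm
      rw [h1]
      refine hmu_mono ?_
      have : (j : ℕ) ≤ (ℓ : ℕ) := Nat.lt_succ_iff.mp j.isLt
      exact this
    exact mul_le_mul_of_nonneg_right hb (sq_nonneg _)
  obtain ⟨e, hyy, hyCy⟩ := quadRepr bC hC.eigenvalues C
    (fun i => hC.mulVec_eigenvectorBasis i) gE hgE y hyE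
  have hlam_bound : lam ℓ' * ⟪y, y⟫ ≤ (⟪y, (WithLp.toLp 2 (C.mulVec y) : EuclideanSpace ℝ (Fin n))⟫ : ℝ) := by
    rw [hyy, hyCy, Finset.mul_sum]
    refine Finset.sum_le_sum fun j _ => ?_
    have hb : lam ℓ' ≤ hC.eigenvalues (gE j) := by
      have h1 : hC.eigenvalues (gE j) = lam j.1 := (hσ j.1).symm
      rw [h1]
      exact hlam_mono j.2
    exact mul_le_mul_of_nonneg_right hb (sq_nonneg _)
  have hyyzz : (⟪y, y⟫ : ℝ) = ⟪z, z⟫ := by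
    calc (⟪y, y⟫ : ℝ) = y ⬝ᵥ y := galerkin_inner_dot y y
      _ = M.mulVec z ⬝ᵥ M.mulVec z := by rw [hyz]
      _ = z ⬝ᵥ z := hdotMM z z
      _ = ⟪z, z⟫ := (galerkin_inner_dot z z).symm
  have hyCyz : (⟪y, (WithLp.toLp 2 (C.mulVec y) : EuclideanSpace ℝ (Fin n))⟫ : ℝ)
      = ⟪z, (WithLp.toLp 2 (CV.mulVec z) : EuclideanSpace ℝ (Fin m))⟫ := by
    calc (⟪y, (WithLp.toLp 2 (C.mulVec y) : EuclideanSpace ℝ (Fin n))⟫ : ℝ) = y ⬝ᵥ C.mulVec y :=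
          galerkin_inner_dot y (WithLp.toLp 2 (C.mulVec y))
      _ = M.mulVec z ⬝ᵥ C.mulVec (M.mulVec z) := by rw [hyz]
      _ = z ⬝ᵥ CV.mulVec z := hdotMCM z z
      _ = ⟪z, (WithLp.toLp 2 (CV.mulVec z) : EuclideanSpace ℝ (Fin m))⟫ :=
          (galerkin_inner_dot z (WithLp.toLp 2 (CV.mulVec z))).symm
  have hpos : 0 < (⟪y, y⟫ : ℝ) := by
    have h0 : (0 : ℝ) ≤ ⟪y, y⟫ := by rw [hyy]; positivity
    exact lt_of_le_of_ne h0 (Ne.symm (inner_self_ne_zero.mpr hy0))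
  have hchain : lam ℓ' * ⟪y, y⟫ ≤ mu ℓ * ⟪y, y⟫ := by
    calc lam ℓ' * ⟪y, y⟫ ≤ (⟪y, (WithLp.toLp 2 (C.mulVec y) : EuclideanSpace ℝ (Fin n))⟫ : ℝ) := hlam_bound
      _ = ⟪z, (WithLp.toLp 2 (CV.mulVec z) : EuclideanSpace ℝ (Fin m))⟫ := hyCyz
      _ ≤ mu ℓ * ⟪z, z⟫ := hmu_bound
      _ = mu ℓ * ⟪y, y⟫ := by rw [hyyzz]
  exact le_of_mul_le_mul_right hchain hpos
end

section
/- Let z, p : ℝ² → ℝ be differentiable at a point v ∈ ℝ², let M > 0 and c > 0, and suppose: |(∂z/∂v_k)(v)| ≤ M and |(∂p/∂v_k)(v)| ≤ M for k = 1,2; |(∂z/∂v_k)(v) − (∂p/∂v_k)(v)| ≤ ε for k = 1,2 with ε ≥ 0; and det g(z)(v) ≥ c and det g(p)(v) ≥ c. Then the graph metrics g(z)(v) and g(p)(v) are invertible, and there is a constant C, depending only on M and c, such that for all q, s ∈ {1,2}, the entries of the inverse matrices satisfy |(g(z)(v)⁻¹)_{qs} − (g(p)(v)⁻¹)_{qs}|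 ≤ Cε. -/
/-- The `k`-th partial derivative of `f : ℝ² → ℝ` at `v`. -/
noncomputable def partialDeriv₂ (f : (Fin 2 → ℝ) → ℝ) (v : Fin 2 → ℝ) (k : Fin 2) : ℝ :=
  fderiv ℝ f v (Pi.single k 1)

/-- The graph metric of `f : ℝ² → ℝ` at `v`, with entries
`g(f)(v)_{qs} = δ_{qs} + (∂f/∂v_q)(v)·(∂f/∂v_s)(v)`. -/
noncomputable def graphMetric (f : (Fin 2 → ℝ) → ℝ) (v : Fin 2 → ℝ) :
    Matrix (Fin 2) (Fin 2) ℝ :=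
  Matrix.of fun q s =>
    (if q = s then (1 : ℝ) else 0) + partialDeriv₂ f v q * partialDeriv₂ f v s

private lemma aux_prod_diff (x y x' y' M ε : ℝ) (hx : |x| ≤ M) (hy' : |y'| ≤ M)
    (h1 : |x - x'| ≤ ε) (h2 : |y - y'| ≤ ε) : |x * y - x' * y'| ≤ 2 * M * ε := by
  have hkey : x * y - x' * y' = x * (y - y') + (x - x') * y' := by ring
  rw [hkey]
  calc |x * (y - y') + (x - x') * y'| ≤ |x| * |y - y'| + |x - x'| * |y'| := by
        rw [← abs_mul, ← abs_mul]; exact abs_add_le _ _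
    _ ≤ M * ε + ε * M := by
        have h0x := abs_nonneg x
        have h0 := abs_nonneg (x - x')
        have h0y := abs_nonneg (y - y')
        have h0y' := abs_nonneg y'
        nlinarith
    _ = 2 * M * ε := by ring

private lemma aux_div (f1 f2 D1 D2 B Δf ΔD : ℝ)
    (h1 : 1 ≤ D1) (h2 : 1 ≤ D2) (hf2 : |f2| ≤ B)
    (hΔf : 0 ≤ Δf) (hΔD : 0 ≤ ΔD)
    (hdf : |f1 - f2| ≤ Δf) (hdD : |D1 - D2| ≤ ΔD) :
    |f1 / D1 - f2 / D2| ≤ Δf + B * ΔD := by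
  have hD1 : 0 < D1 := lt_of_lt_of_le one_pos h1
  have hD2 : 0 < D2 := lt_of_lt_of_le one_pos h2
  have hB : 0 ≤ B := (abs_nonneg f2).trans hf2
  have key : f1 / D1 - f2 / D2 = ((f1 - f2) * D2 + f2 * (D2 - D1)) / (D1 * D2) := by
    field_simp; ring
  rw [key, abs_div, abs_of_pos (mul_pos hD1 hD2), div_le_iff₀ (mul_pos hD1 hD2)]
  have step1 : |(f1 - f2) * D2 + f2 * (D2 - D1)| ≤ |f1 - f2| * D2 + |f2| * |D2 - D1| := by
    calc |(f1 - f2) * D2 + f2 * (D2 - D1)| ≤ |(f1 - f2) * D2| + |f2 * (D2 - D1)| :=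
          abs_add_le _ _
      _ = |f1 - f2| * D2 + |f2| * |D2 - D1| := by
          rw [abs_mul, abs_mul, abs_of_pos hD2]
  have hdD' : |D2 - D1| ≤ ΔD := by rw [abs_sub_comm]; exact hdD
  have hdd := abs_nonneg (D2 - D1)
  have hDD : (1:ℝ) ≤ D1 * D2 := by nlinarith
  have t1 : |f1 - f2| * D2 ≤ Δf * D2 := mul_le_mul_of_nonneg_right hdf hD2.le
  have t2 : |f2| * |D2 - D1| ≤ B * ΔD := mul_le_mul hf2 hdD' hdd hB
  have hd2 : D2 ≤ D1 * D2 := le_mul_of_one_le_left hD2.le h1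
  have t3 : Δf * D2 ≤ Δf * (D1 * D2) := mul_le_mul_of_nonneg_left hd2 hΔf
  have t4 : B * ΔD ≤ B * ΔD * (D1 * D2) := by nlinarith [mul_nonneg hB hΔD]
  calc |(f1 - f2) * D2 + f2 * (D2 - D1)|
      ≤ Δf * (D1 * D2) + B * ΔD * (D1 * D2) := by linarith
    _ = (Δf + B * ΔD) * (D1 * D2) := by ring

set_option maxHeartbeats 1000000 in
/-- If the first partials of `z` and `p` at `v` are bounded by `M` and `ε`-close, and both
graph-metric determinants are bounded below by `c > 0`, then the graph metrics are
invertible and the entries of their inverses are `Cε`-close, with `C` depending only on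
`M` and `c`. -/
theorem graphMetric_inv_approx (M c : ℝ) (hM : 0 < M) (hc : 0 < c) :
    ∃ C : ℝ, ∀ (z p : (Fin 2 → ℝ) → ℝ) (v : Fin 2 → ℝ) (ε : ℝ), 0 ≤ ε →
      DifferentiableAt ℝ z v → DifferentiableAt ℝ p v →
      (∀ k, |partialDeriv₂ z v k| ≤ M) →
      (∀ k, |partialDeriv₂ p v k| ≤ M) →
      (∀ k, |partialDeriv₂ z v k - partialDeriv₂ p v k| ≤ ε) →
      c ≤ (graphMetric z v).det → c ≤ (graphMetric p v).det →
      IsUnit (graphMetric z v) ∧ IsUnit (graphMetric p v) ∧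
        ∀ q s, |(graphMetric z v)⁻¹ q s - (graphMetric p v)⁻¹ q s| ≤ C * ε := by
  refine ⟨2 * M + (1 + M ^ 2) * (4 * M), ?_⟩
  intro z p v ε hε hz hp haM hbM hab hdz hdp
  set a := partialDeriv₂ z v with ha
  set b := partialDeriv₂ p v with hb
  have hgz : ∀ q s, graphMetric z v q s = (if q = s then (1:ℝ) else 0) + a q * a s :=
    fun q s => rfl
  have hgp : ∀ q s, graphMetric p v q s = (if q = s then (1:ℝ) else 0) + b q * b s :=
    fun q s => rfl
  clear_value a b
  have hM2 : ∀ k, (a k) ^ 2 ≤ M ^ 2 := fun k => by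
    have := haM k; nlinarith [abs_nonneg (a k), sq_abs (a k), this]
  have hN2 : ∀ k, (b k) ^ 2 ≤ M ^ 2 := fun k => by
    have := hbM k; nlinarith [abs_nonneg (b k), sq_abs (b k), this]
  have hdetz : (graphMetric z v).det = 1 + a 0 ^ 2 + a 1 ^ 2 := by
    rw [Matrix.det_fin_two, hgz, hgz, hgz, hgz]
    norm_num; ring
  have hdetp : (graphMetric p v).det = 1 + b 0 ^ 2 + b 1 ^ 2 := by
    rw [Matrix.det_fin_two, hgp, hgp, hgp, hgp]
    norm_num; ring
  have hDz1 : (1:ℝ) ≤ 1 + a 0 ^ 2 + a 1 ^ 2 := by nlinarith [sq_nonneg (a 0), sq_nonneg (a 1)]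
  have hDp1 : (1:ℝ) ≤ 1 + b 0 ^ 2 + b 1 ^ 2 := by nlinarith [sq_nonneg (b 0), sq_nonneg (b 1)]
  have hdetz0 : (graphMetric z v).det ≠ 0 := by rw [hdetz]; linarith
  have hdetp0 : (graphMetric p v).det ≠ 0 := by rw [hdetp]; linarith
  have huz : IsUnit (graphMetric z v) := by
    rw [Matrix.isUnit_iff_isUnit_det, isUnit_iff_ne_zero]; exact hdetz0
  have hup : IsUnit (graphMetric p v) := by
    rw [Matrix.isUnit_iff_isUnit_det, isUnit_iff_ne_zero]; exact hdetp0
  refine ⟨huz, hup, ?_⟩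
  -- inverse entries
  have hinv : ∀ (A : Matrix (Fin 2) (Fin 2) ℝ), A.det ≠ 0 →
      ∀ q s, A⁻¹ q s = A.adjugate q s / A.det := by
    intro A hA q s
    rw [Matrix.inv_def, Matrix.smul_apply, Ring.inverse_eq_inv', smul_eq_mul,
      div_eq_inv_mul]
  have hadjz := Matrix.adjugate_fin_two (graphMetric z v)
  have hadjp := Matrix.adjugate_fin_two (graphMetric p v)
  -- difference bounds
  have hsq : ∀ k, |a k ^ 2 - b k ^ 2| ≤ 2 * M * ε := by
    intro k
    have := aux_prod_diff (a k) (a k) (b k) (b k) M ε (haM k) (hbM k) (hab k) (hab k)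
    calc |a k ^ 2 - b k ^ 2| = |a k * a k - b k * b k| := by ring_nf
      _ ≤ 2 * M * ε := this
  have hDdiff : |(1 + a 0 ^ 2 + a 1 ^ 2) - (1 + b 0 ^ 2 + b 1 ^ 2)| ≤ 4 * M * ε := by
    have h0 := hsq 0
    have h1 := hsq 1
    calc |(1 + a 0 ^ 2 + a 1 ^ 2) - (1 + b 0 ^ 2 + b 1 ^ 2)|
        = |(a 0 ^ 2 - b 0 ^ 2) + (a 1 ^ 2 - b 1 ^ 2)| := by ring_nf
      _ ≤ |a 0 ^ 2 - b 0 ^ 2| + |a 1 ^ 2 - b 1 ^ 2| := abs_add_le _ _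
      _ ≤ 4 * M * ε := by linarith
  have hcross : |a 0 * a 1 - b 0 * b 1| ≤ 2 * M * ε :=
    aux_prod_diff (a 0) (a 1) (b 0) (b 1) M ε (haM 0) (hbM 1) (hab 0) (hab 1)
  have hΔf : (0:ℝ) ≤ 2 * M * ε := by positivity
  have hΔD : (0:ℝ) ≤ 4 * M * ε := by positivity
  have hfinal : ∀ f1 f2 : ℝ, |f2| ≤ 1 + M ^ 2 → |f1 - f2| ≤ 2 * M * ε →
      |f1 / (graphMetric z v).det - f2 / (graphMetric p v).det| ≤
        (2 * M + (1 + M ^ 2) * (4 * M)) * ε := by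
    intro f1 f2 hf2 hdf
    rw [hdetz, hdetp]
    have := aux_div f1 f2 (1 + a 0 ^ 2 + a 1 ^ 2) (1 + b 0 ^ 2 + b 1 ^ 2)
      (1 + M ^ 2) (2 * M * ε) (4 * M * ε) hDz1 hDp1 hf2 hΔf hΔD hdf hDdiff
    calc |f1 / (1 + a 0 ^ 2 + a 1 ^ 2) - f2 / (1 + b 0 ^ 2 + b 1 ^ 2)|
        ≤ 2 * M * ε + (1 + M ^ 2) * (4 * M * ε) := this
      _ = (2 * M + (1 + M ^ 2) * (4 * M)) * ε := by ring
  have az00 : (graphMetric z v).adjugate 0 0 = 1 + a 1 * a 1 := by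
    rw [hadjz]; rw [hgz 1 1]; norm_num
  have az01 : (graphMetric z v).adjugate 0 1 = -(a 0 * a 1) := by
    rw [hadjz]; rw [hgz 0 1]; norm_num
  have az10 : (graphMetric z v).adjugate 1 0 = -(a 1 * a 0) := by
    rw [hadjz]; rw [hgz 1 0]; norm_num
  have az11 : (graphMetric z v).adjugate 1 1 = 1 + a 0 * a 0 := by
    rw [hadjz]; rw [hgz 0 0]; norm_num
  have ap00 : (graphMetric p v).adjugate 0 0 = 1 + b 1 * b 1 := by
    rw [hadjp]; rw [hgp 1 1]; norm_num
  have ap01 : (graphMetric p v).adjugate 0 1 = -(b 0 * b 1) := by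
    rw [hadjp]; rw [hgp 0 1]; norm_num
  have ap10 : (graphMetric p v).adjugate 1 0 = -(b 1 * b 0) := by
    rw [hadjp]; rw [hgp 1 0]; norm_num
  have ap11 : (graphMetric p v).adjugate 1 1 = 1 + b 0 * b 0 := by
    rw [hadjp]; rw [hgp 0 0]; norm_num
  intro q s
  rw [hinv _ hdetz0, hinv _ hdetp0]
  fin_cases q <;> fin_cases s <;>
    simp only [Fin.zero_eta, Fin.mk_one, Fin.isValue]
  · rw [az00, ap00]
    apply hfinal
    · rw [abs_of_nonneg (by nlinarith [sq_nonneg (b 1)])]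
      nlinarith [hN2 1]
    · have e : 1 + a 1 * a 1 - (1 + b 1 * b 1) = a 1 ^ 2 - b 1 ^ 2 := by ring
      rw [e]; exact hsq 1
  · rw [az01, ap01]
    apply hfinal
    · rw [abs_neg, abs_mul]
      nlinarith [hbM 0, hbM 1, abs_nonneg (b 0), abs_nonneg (b 1)]
    · have e : -(a 0 * a 1) - -(b 0 * b 1) = b 0 * b 1 - a 0 * a 1 := by ring
      rw [e, abs_sub_comm]; exact hcross
  · rw [az10, ap10]
    apply hfinal
    · rw [abs_neg, abs_mul]
      nlinarith [hbM 0, hbM 1, abs_nonneg (b 0), abs_nonneg (b 1)]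
    · have e : -(a 1 * a 0) - -(b 1 * b 0) = b 0 * b 1 - a 0 * a 1 := by ring
      rw [e, abs_sub_comm]; exact hcross
  · rw [az11, ap11]
    apply hfinal
    · rw [abs_of_nonneg (by nlinarith [sq_nonneg (b 0)])]
      nlinarith [hN2 0]
    · have e : 1 + a 0 * a 0 - (1 + b 0 * b 0) = a 0 ^ 2 - b 0 ^ 2 := by ring
      rw [e]; exact hsq 0
end

section
/- Let z, p : ℝ² → ℝ be twice differentiable at a point v ∈ ℝ², let M > 0 and c > 0, and suppose: all first and second partial derivatives of z and of p at v are bounded in absolute value by M; |(∂z/∂v_k)(v) − (∂p/∂v_k)(v)| ≤ ε and |(∂²z/∂v_k∂v_t)(v) − (∂²p/∂v_k∂v_t)(v)| ≤ ε for all k, t ∈ {1,2}, with ε ≥ 0; and det g(z)(v) ≥ c, det g(p)(v) ≥ c. Then there is a constant C, depending only on M and c, such that for all q, s, t ∈ {1,2}, the Christoffel symbols of the graph metrics satisfy |Γ(z)^q_{st}(v) − Γ(p)^q_{st}(v)| ≤ Cε. -/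
/-- The second partial derivative `∂²f/∂v_k∂v_t` of `f : ℝ² → ℝ` at `v`. -/
noncomputable def partialDeriv₂₂ (f : (Fin 2 → ℝ) → ℝ) (v : Fin 2 → ℝ) (k t : Fin 2) : ℝ :=
  fderiv ℝ (fun w => fderiv ℝ f w (Pi.single t 1)) v (Pi.single k 1)

/-- The partial derivative `∂g(f)_{qs}/∂v_t` of the graph-metric entries:
`∂g(f)_{qs}/∂v_t = (∂²f/∂v_q∂v_t)(∂f/∂v_s) + (∂f/∂v_q)(∂²f/∂v_s∂v_t)`. -/
noncomputable def graphMetricDeriv (f : (Fin 2 → ℝ) → ℝ) (v : Fin 2 → ℝ) (q s t : Fin 2) : ℝ :=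
  partialDeriv₂₂ f v q t * partialDeriv₂ f v s + partialDeriv₂ f v q * partialDeriv₂₂ f v s t

/-- The Christoffel symbols `Γ(f)^q_{st}` of the graph metric of `f` at `v`:
`Γ(f)^q_{st} = ½ Σ_r (g(f)⁻¹)_{qr} (∂g(f)_{rt}/∂v_s + ∂g(f)_{rs}/∂v_t − ∂g(f)_{st}/∂v_r)`. -/
noncomputable def graphChristoffel (f : (Fin 2 → ℝ) → ℝ) (v : Fin 2 → ℝ) (q s t : Fin 2) : ℝ :=
  (1 / 2) * ∑ r : Fin 2, (graphMetric f v)⁻¹ q r *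
    (graphMetricDeriv f v r t s + graphMetricDeriv f v r s t - graphMetricDeriv f v s t r)

private lemma abs_sub_le'' (x y : ℝ) : |x - y| ≤ |x| + |y| := by
  calc |x - y| = |x + -y| := by ring_nf
  _ ≤ |x| + |-y| := abs_add_le _ _
  _ = |x| + |y| := by rw [abs_neg]

private lemma prod_le' (a b A B : ℝ) (h1 : |a| ≤ A) (h2 : |b| ≤ B) : |a * b| ≤ A * B := by
  rw [abs_mul]
  exact mul_le_mul h1 h2 (abs_nonneg _) ((abs_nonneg _).trans h1)

private lemma prod_diff_le (a b a' b' e1 e2 A B : ℝ)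
    (h1 : |a - a'| ≤ e1) (h2 : |b| ≤ B) (h3 : |a'| ≤ A) (h4 : |b - b'| ≤ e2) :
    |a * b - a' * b'| ≤ e1 * B + A * e2 := by
  have key : a * b - a' * b' = (a - a') * b + a' * (b - b') := by ring
  calc |a * b - a' * b'| = |(a - a') * b + a' * (b - b')| := by rw [key]
    _ ≤ |(a - a') * b| + |a' * (b - b')| := abs_add_le _ _
    _ ≤ e1 * B + A * e2 := add_le_add (prod_le' _ _ _ _ h1 h2) (prod_le' _ _ _ _ h3 h4)

private lemma inv_mul_bound (d a c B : ℝ) (hc : 0 < c) (hd : c ≤ d) (ha : |a| ≤ B) :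
    |d⁻¹ * a| ≤ B / c := by
  have hd0 : 0 < d := hc.trans_le hd
  rw [abs_mul, abs_inv, abs_of_pos hd0, inv_mul_eq_div]
  exact div_le_div₀ ((abs_nonneg a).trans ha) ha hc hd

private lemma div_diff_bound (x x' d d' c B D e E : ℝ) (hc : 0 < c)
    (hd : c ≤ d) (hd' : c ≤ d') (hx' : |x'| ≤ B) (hD : |d'| ≤ D)
    (he : |x - x'| ≤ e) (hE : |d - d'| ≤ E) :
    |d⁻¹ * x - d'⁻¹ * x'| ≤ (e * D + B * E) / c ^ 2 := by
  have hd0 : 0 < d := hc.trans_le hd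
  have hd0' : 0 < d' := hc.trans_le hd'
  have key : d⁻¹ * x - d'⁻¹ * x' = (x * d' - x' * d) / (d * d') := by
    field_simp
  have hnum : |x * d' - x' * d| ≤ e * D + B * E := by
    have h4 : |d' - d| ≤ E := by rwa [abs_sub_comm]
    exact prod_diff_le x d' x' d e E B D he hD hx' h4
  rw [key, abs_div, abs_of_pos (mul_pos hd0 hd0')]
  exact div_le_div₀ ((abs_nonneg _).trans hnum) hnum (pow_pos hc 2) (by nlinarith)

private lemma half_sum_bound (x y K : ℝ) (hx : |x| ≤ K) (hy : |y| ≤ K) :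
    |1 / 2 * (x + y)| ≤ K := by
  have h := (abs_add_le x y).trans (add_le_add hx hy)
  rw [abs_mul, show |(1:ℝ) / 2| = 1 / 2 by norm_num]
  linarith

/-- If all first and second partials of `z` and `p` at `v` are bounded by `M` and `ε`-close,
and both graph-metric determinants are bounded below by `c > 0`, then the Christoffel
symbols of the two graph metrics are `Cε`-close, with `C` depending only on `M` and `c`. -/
theorem graphChristoffel_approx (M c : ℝ) (hM : 0 < M) (hc : 0 < c) :
    ∃ C : ℝ, ∀ (z p : (Fin 2 → ℝ) → ℝ) (v : Fin 2 → ℝ) (ε : ℝ), 0 ≤ ε →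
      DifferentiableAt ℝ z v → DifferentiableAt ℝ p v →
      (∀ t, DifferentiableAt ℝ (fun w => fderiv ℝ z w (Pi.single t 1)) v) →
      (∀ t, DifferentiableAt ℝ (fun w => fderiv ℝ p w (Pi.single t 1)) v) →
      (∀ k, |partialDeriv₂ z v k| ≤ M) →
      (∀ k, |partialDeriv₂ p v k| ≤ M) →
      (∀ k t, |partialDeriv₂₂ z v k t| ≤ M) →
      (∀ k t, |partialDeriv₂₂ p v k t| ≤ M) →
      (∀ k, |partialDeriv₂ z v k - partialDeriv₂ p v k| ≤ ε) →
      (∀ k t, |partialDeriv₂₂ z v k t - partialDeriv₂₂ p v k t| ≤ ε) →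
      c ≤ (graphMetric z v).det → c ≤ (graphMetric p v).det →
      ∀ q s t, |graphChristoffel z v q s t - graphChristoffel p v q s t| ≤ C * ε := by
  refine ⟨72 * M ^ 3 * (1 + M ^ 2) ^ 2 / c ^ 2 + 12 * M * (1 + M ^ 2) / c, ?_⟩
  intro z p v ε hε _ _ _ _ hz1 hp1 hz2 hp2 hd1 hd2 hdetz hdetp q s t
  -- entry bounds
  have entry_bd : ∀ (f : (Fin 2 → ℝ) → ℝ), (∀ k, |partialDeriv₂ f v k| ≤ M) →
      ∀ a b : Fin 2, |graphMetric f v a b| ≤ 1 + M ^ 2 := by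
    intro f hf a b
    simp only [graphMetric, Matrix.of_apply]
    have h1 : |(if a = b then (1:ℝ) else 0)| ≤ 1 := by split_ifs <;> simp
    have h2 : |partialDeriv₂ f v a * partialDeriv₂ f v b| ≤ M * M :=
      prod_le' _ _ _ _ (hf a) (hf b)
    calc |(if a = b then (1:ℝ) else 0) + partialDeriv₂ f v a * partialDeriv₂ f v b|
        ≤ |(if a = b then (1:ℝ) else 0)| + |partialDeriv₂ f v a * partialDeriv₂ f v b| :=
          abs_add_le _ _
      _ ≤ 1 + M * M := add_le_add h1 h2
      _ = 1 + M ^ 2 := by ring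
  have entry_bd_z := entry_bd z hz1
  have entry_bd_p := entry_bd p hp1
  -- entry difference bound
  have entry_diff : ∀ a b : Fin 2,
      |graphMetric z v a b - graphMetric p v a b| ≤ 2 * M * ε := by
    intro a b
    simp only [graphMetric, Matrix.of_apply]
    have key : (if a = b then (1:ℝ) else 0) + partialDeriv₂ z v a * partialDeriv₂ z v b -
        ((if a = b then (1:ℝ) else 0) + partialDeriv₂ p v a * partialDeriv₂ p v b) =
        partialDeriv₂ z v a * partialDeriv₂ z v b -
          partialDeriv₂ p v a * partialDeriv₂ p v b := by ring
    rw [key]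
    calc |partialDeriv₂ z v a * partialDeriv₂ z v b -
          partialDeriv₂ p v a * partialDeriv₂ p v b|
        ≤ ε * M + M * ε := prod_diff_le _ _ _ _ _ _ _ _ (hd1 a) (hz1 b) (hp1 a) (hd1 b)
      _ = 2 * M * ε := by ring
  -- det bounds
  have det_bd_p : |(graphMetric p v).det| ≤ 2 * (1 + M ^ 2) ^ 2 := by
    rw [Matrix.det_fin_two]
    calc |graphMetric p v 0 0 * graphMetric p v 1 1 -
          graphMetric p v 0 1 * graphMetric p v 1 0|
        ≤ |graphMetric p v 0 0 * graphMetric p v 1 1| +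
            |graphMetric p v 0 1 * graphMetric p v 1 0| := abs_sub_le'' _ _
      _ ≤ (1 + M ^ 2) * (1 + M ^ 2) + (1 + M ^ 2) * (1 + M ^ 2) :=
          add_le_add (prod_le' _ _ _ _ (entry_bd_p 0 0) (entry_bd_p 1 1))
            (prod_le' _ _ _ _ (entry_bd_p 0 1) (entry_bd_p 1 0))
      _ = 2 * (1 + M ^ 2) ^ 2 := by ring
  have det_diff : |(graphMetric z v).det - (graphMetric p v).det|
      ≤ 8 * M * (1 + M ^ 2) * ε := by
    rw [Matrix.det_fin_two, Matrix.det_fin_two]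
    have key : graphMetric z v 0 0 * graphMetric z v 1 1 -
        graphMetric z v 0 1 * graphMetric z v 1 0 -
        (graphMetric p v 0 0 * graphMetric p v 1 1 -
          graphMetric p v 0 1 * graphMetric p v 1 0) =
        (graphMetric z v 0 0 * graphMetric z v 1 1 -
          graphMetric p v 0 0 * graphMetric p v 1 1) -
        (graphMetric z v 0 1 * graphMetric z v 1 0 -
          graphMetric p v 0 1 * graphMetric p v 1 0) := by ring
    rw [key]
    have h1 : |graphMetric z v 0 0 * graphMetric z v 1 1 -
        graphMetric p v 0 0 * graphMetric p v 1 1|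
        ≤ 2 * M * ε * (1 + M ^ 2) + (1 + M ^ 2) * (2 * M * ε) :=
      prod_diff_le _ _ _ _ _ _ _ _ (entry_diff 0 0) (entry_bd_z 1 1) (entry_bd_p 0 0)
        (entry_diff 1 1)
    have h2 : |graphMetric z v 0 1 * graphMetric z v 1 0 -
        graphMetric p v 0 1 * graphMetric p v 1 0|
        ≤ 2 * M * ε * (1 + M ^ 2) + (1 + M ^ 2) * (2 * M * ε) :=
      prod_diff_le _ _ _ _ _ _ _ _ (entry_diff 0 1) (entry_bd_z 1 0) (entry_bd_p 0 1)
        (entry_diff 1 0)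
    calc |_ - _| ≤ _ := abs_sub_le'' _ _
      _ ≤ (2 * M * ε * (1 + M ^ 2) + (1 + M ^ 2) * (2 * M * ε)) +
          (2 * M * ε * (1 + M ^ 2) + (1 + M ^ 2) * (2 * M * ε)) := add_le_add h1 h2
      _ = 8 * M * (1 + M ^ 2) * ε := by ring
  -- adjugate bounds
  have adj_bd_p : ∀ a b : Fin 2, |(graphMetric p v).adjugate a b| ≤ 1 + M ^ 2 := by
    intro a b
    rw [Matrix.adjugate_fin_two]
    fin_cases a <;> fin_cases b <;> simp [abs_neg] <;> exact entry_bd_p _ _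
  have adj_diff : ∀ a b : Fin 2,
      |(graphMetric z v).adjugate a b - (graphMetric p v).adjugate a b| ≤ 2 * M * ε := by
    intro a b
    rw [Matrix.adjugate_fin_two, Matrix.adjugate_fin_two]
    fin_cases a <;> fin_cases b <;> simp [neg_sub_neg] <;>
      first
        | exact entry_diff _ _
        | (rw [neg_add_eq_sub, abs_sub_comm]; exact entry_diff _ _)
  -- inverse entries
  have hinv : ∀ (f : (Fin 2 → ℝ) → ℝ) (a b : Fin 2),
      (graphMetric f v)⁻¹ a b = ((graphMetric f v).det)⁻¹ * (graphMetric f v).adjugate a b := by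
    intro f a b
    rw [Matrix.inv_def]
    simp [Ring.inverse_eq_inv, Matrix.smul_apply, smul_eq_mul]
  have inv_bd_p : ∀ a b : Fin 2, |(graphMetric p v)⁻¹ a b| ≤ (1 + M ^ 2) / c := by
    intro a b
    rw [hinv]
    exact inv_mul_bound _ _ _ _ hc hdetp (adj_bd_p a b)
  have inv_diff : ∀ a b : Fin 2,
      |(graphMetric z v)⁻¹ a b - (graphMetric p v)⁻¹ a b|
      ≤ (2 * M * ε * (2 * (1 + M ^ 2) ^ 2) + (1 + M ^ 2) * (8 * M * (1 + M ^ 2) * ε)) / c ^ 2 := by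
    intro a b
    rw [hinv, hinv]
    exact div_diff_bound _ _ _ _ c _ _ _ _ hc hdetz hdetp (adj_bd_p a b) det_bd_p
      (adj_diff a b) det_diff
  -- graphMetricDeriv bounds
  have gmd_bd_z : ∀ a b d : Fin 2, |graphMetricDeriv z v a b d| ≤ 2 * M ^ 2 := by
    intro a b d
    unfold graphMetricDeriv
    calc |partialDeriv₂₂ z v a d * partialDeriv₂ z v b +
          partialDeriv₂ z v a * partialDeriv₂₂ z v b d|
        ≤ |partialDeriv₂₂ z v a d * partialDeriv₂ z v b| +
            |partialDeriv₂ z v a * partialDeriv₂₂ z v b d| := abs_add_le _ _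
      _ ≤ M * M + M * M := add_le_add (prod_le' _ _ _ _ (hz2 a d) (hz1 b))
          (prod_le' _ _ _ _ (hz1 a) (hz2 b d))
      _ = 2 * M ^ 2 := by ring
  have gmd_diff : ∀ a b d : Fin 2,
      |graphMetricDeriv z v a b d - graphMetricDeriv p v a b d| ≤ 4 * M * ε := by
    intro a b d
    unfold graphMetricDeriv
    have key : partialDeriv₂₂ z v a d * partialDeriv₂ z v b +
        partialDeriv₂ z v a * partialDeriv₂₂ z v b d -
        (partialDeriv₂₂ p v a d * partialDeriv₂ p v b +
          partialDeriv₂ p v a * partialDeriv₂₂ p v b d) =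
        (partialDeriv₂₂ z v a d * partialDeriv₂ z v b -
          partialDeriv₂₂ p v a d * partialDeriv₂ p v b) +
        (partialDeriv₂ z v a * partialDeriv₂₂ z v b d -
          partialDeriv₂ p v a * partialDeriv₂₂ p v b d) := by ring
    rw [key]
    calc |_ + _| ≤ _ := abs_add_le _ _
      _ ≤ (ε * M + M * ε) + (ε * M + M * ε) := add_le_add
          (prod_diff_le _ _ _ _ _ _ _ _ (hd2 a d) (hz1 b) (hp2 a d) (hd1 b))
          (prod_diff_le _ _ _ _ _ _ _ _ (hd1 a) (hz2 b d) (hp1 a) (hd2 b d))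
      _ = 4 * M * ε := by ring
  -- the D-combination
  have D_bd_z : ∀ r : Fin 2,
      |graphMetricDeriv z v r t s + graphMetricDeriv z v r s t - graphMetricDeriv z v s t r|
      ≤ 6 * M ^ 2 := by
    intro r
    calc |graphMetricDeriv z v r t s + graphMetricDeriv z v r s t - graphMetricDeriv z v s t r|
        ≤ |graphMetricDeriv z v r t s + graphMetricDeriv z v r s t| +
            |graphMetricDeriv z v s t r| := abs_sub_le'' _ _
      _ ≤ (|graphMetricDeriv z v r t s| + |graphMetricDeriv z v r s t|) +
            |graphMetricDeriv z v s t r| := by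
          exact add_le_add_left (abs_add_le _ _) _
      _ ≤ (2 * M ^ 2 + 2 * M ^ 2) + 2 * M ^ 2 := add_le_add
          (add_le_add (gmd_bd_z _ _ _) (gmd_bd_z _ _ _)) (gmd_bd_z _ _ _)
      _ = 6 * M ^ 2 := by ring
  have D_diff : ∀ r : Fin 2,
      |(graphMetricDeriv z v r t s + graphMetricDeriv z v r s t - graphMetricDeriv z v s t r) -
        (graphMetricDeriv p v r t s + graphMetricDeriv p v r s t - graphMetricDeriv p v s t r)|
      ≤ 12 * M * ε := by
    intro r
    have key : (graphMetricDeriv z v r t s + graphMetricDeriv z v r s t -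
        graphMetricDeriv z v s t r) -
        (graphMetricDeriv p v r t s + graphMetricDeriv p v r s t -
          graphMetricDeriv p v s t r) =
        ((graphMetricDeriv z v r t s - graphMetricDeriv p v r t s) +
          (graphMetricDeriv z v r s t - graphMetricDeriv p v r s t)) -
        (graphMetricDeriv z v s t r - graphMetricDeriv p v s t r) := by ring
    rw [key]
    calc |_ - _| ≤ _ := abs_sub_le'' _ _
      _ ≤ (|graphMetricDeriv z v r t s - graphMetricDeriv p v r t s| +
            |graphMetricDeriv z v r s t - graphMetricDeriv p v r s t|) +
            |graphMetricDeriv z v s t r - graphMetricDeriv p v s t r| := by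
          exact add_le_add_left (abs_add_le _ _) _
      _ ≤ (4 * M * ε + 4 * M * ε) + 4 * M * ε := add_le_add
          (add_le_add (gmd_diff _ _ _) (gmd_diff _ _ _)) (gmd_diff _ _ _)
      _ = 12 * M * ε := by ring
  -- per-term bound
  set K : ℝ := ((2 * M * ε * (2 * (1 + M ^ 2) ^ 2) +
      (1 + M ^ 2) * (8 * M * (1 + M ^ 2) * ε)) / c ^ 2) * (6 * M ^ 2) +
      ((1 + M ^ 2) / c) * (12 * M * ε) with hK
  have term_bd : ∀ r : Fin 2,
      |(graphMetric z v)⁻¹ q r *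
        (graphMetricDeriv z v r t s + graphMetricDeriv z v r s t - graphMetricDeriv z v s t r) -
        (graphMetric p v)⁻¹ q r *
        (graphMetricDeriv p v r t s + graphMetricDeriv p v r s t - graphMetricDeriv p v s t r)|
      ≤ K := by
    intro r
    exact prod_diff_le _ _ _ _ _ _ _ _ (inv_diff q r) (D_bd_z r) (inv_bd_p q r) (D_diff r)
  -- assemble
  have expand : graphChristoffel z v q s t - graphChristoffel p v q s t =
      1 / 2 * (((graphMetric z v)⁻¹ q 0 *
        (graphMetricDeriv z v 0 t s + graphMetricDeriv z v 0 s t - graphMetricDeriv z v s t 0) -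
        (graphMetric p v)⁻¹ q 0 *
        (graphMetricDeriv p v 0 t s + graphMetricDeriv p v 0 s t - graphMetricDeriv p v s t 0)) +
        ((graphMetric z v)⁻¹ q 1 *
        (graphMetricDeriv z v 1 t s + graphMetricDeriv z v 1 s t - graphMetricDeriv z v s t 1) -
        (graphMetric p v)⁻¹ q 1 *
        (graphMetricDeriv p v 1 t s + graphMetricDeriv p v 1 s t - graphMetricDeriv p v s t 1))) := by
    simp only [graphChristoffel, Fin.sum_univ_two]
    ring
  have hKC : K = (72 * M ^ 3 * (1 + M ^ 2) ^ 2 / c ^ 2 + 12 * M * (1 + M ^ 2) / c) * ε := by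
    rw [hK]
    field_simp
    ring
  rw [expand]
  exact (half_sum_bound _ _ K (term_bd 0) (term_bd 1)).trans (le_of_eq hKC)
end

section
/- Let w₀, w₁, w₂ ∈ ℝ² and let D be the 2×2 matrix whose columns are w₁ − w₀ and w₂ − w₀; assume D is invertible. Let f, f̂ : ℝ² → ℝ be affine functions (i.e., each is a linear map plus a constant) satisfying |f(w_i) − f̂(w_i)| ≤ δ for i ∈ {0,1,2}, where δ ≥ 0. Then their (constant) gradients satisfy ‖∇f − ∇f̂‖ ≤ 2√2 · ‖D⁻¹‖₂ · δ, where ‖D⁻¹‖₂ is the operator norm of D⁻¹ and ‖·‖ is the Euclidean norm on ℝ². -/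
open Matrix
open scoped Matrix.Norms.L2Operator

/-- **Stability of linear interpolation on a nondegenerate triangle.**
Let `w₀, w₁, w₂ ∈ ℝ²`, let `D` be the matrix with columns `w₁ − w₀` and `w₂ − w₀`, and
assume `D` is invertible.  If two affine functions `f(x) = ⟨a,x⟩ + b` and
`f̂(x) = ⟨â,x⟩ + b̂` satisfy `|f(wᵢ) − f̂(wᵢ)| ≤ δ` for `i = 0,1,2`, then their constant
gradients satisfy `‖a − â‖ ≤ 2√2 ‖D⁻¹‖₂ δ` (Euclidean norm on `ℝ²`, operator 2-norm
of `D⁻¹`). -/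
theorem affine_interpolation_gradient_stability
    (w₀ w₁ w₂ : Fin 2 → ℝ)
    (D : Matrix (Fin 2) (Fin 2) ℝ)
    (hD : ∀ i, D i 0 = w₁ i - w₀ i ∧ D i 1 = w₂ i - w₀ i)
    (hDinv : IsUnit D)
    (a ahat : Fin 2 → ℝ) (b bhat : ℝ)
    (f fhat : (Fin 2 → ℝ) → ℝ)
    (hf : ∀ x, f x = a ⬝ᵥ x + b)
    (hfhat : ∀ x, fhat x = ahat ⬝ᵥ x + bhat)
    (δ : ℝ) (hδ : 0 ≤ δ)
    (h0 : |f w₀ - fhat w₀| ≤ δ)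
    (h1 : |f w₁ - fhat w₁| ≤ δ)
    (h2 : |f w₂ - fhat w₂| ≤ δ) :
    Real.sqrt (∑ i, (a i - ahat i) ^ 2) ≤ 2 * Real.sqrt 2 * ‖D⁻¹‖ * δ := by
  set g : Fin 2 → ℝ := a - ahat with hg
  set y : Fin 2 → ℝ := Dᵀ *ᵥ g with hy
  have hy0 : |y 0| ≤ 2 * δ := by
    have : y 0 = (f w₁ - fhat w₁) - (f w₀ - fhat w₀) := by
      simp only [hy, mulVec, dotProduct, transpose_apply, hf, hfhat, hg]
      simp only [Fin.sum_univ_two, Pi.sub_apply]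
      rw [(hD 0).1, (hD 1).1]; ring
    rw [this]
    calc |(f w₁ - fhat w₁) - (f w₀ - fhat w₀)| ≤ |f w₁ - fhat w₁| + |f w₀ - fhat w₀| :=
          abs_sub _ _
      _ ≤ δ + δ := add_le_add h1 h0
      _ = 2 * δ := by ring
  have hy1 : |y 1| ≤ 2 * δ := by
    have : y 1 = (f w₂ - fhat w₂) - (f w₀ - fhat w₀) := by
      simp only [hy, mulVec, dotProduct, transpose_apply, hf, hfhat, hg]
      simp only [Fin.sum_univ_two, Pi.sub_apply]
      rw [(hD 0).2, (hD 1).2]; ring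
    rw [this]
    calc |(f w₂ - fhat w₂) - (f w₀ - fhat w₀)| ≤ |f w₂ - fhat w₂| + |f w₀ - fhat w₀| :=
          abs_sub _ _
      _ ≤ δ + δ := add_le_add h2 h0
      _ = 2 * δ := by ring
  have hDT : IsUnit Dᵀ := (Matrix.isUnit_transpose D).mpr hDinv
  have hdet : IsUnit (Dᵀ).det := (Matrix.isUnit_iff_isUnit_det _).mp hDT
  have hgy : (Dᵀ)⁻¹ *ᵥ y = g := by
    rw [hy, mulVec_mulVec, Matrix.nonsing_inv_mul _ hdet, one_mulVec]
  have hnorm : ‖(Dᵀ)⁻¹‖ = ‖D⁻¹‖ := by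
    rw [← Matrix.transpose_nonsing_inv, ← Matrix.conjTranspose_eq_transpose_of_trivial,
      Matrix.l2_opNorm_conjTranspose]
  have key := Matrix.l2_opNorm_mulVec (Dᵀ)⁻¹ ((EuclideanSpace.equiv (Fin 2) ℝ).symm y)
  have hgE : ‖(EuclideanSpace.equiv (Fin 2) ℝ).symm ((Dᵀ)⁻¹ *ᵥ ((EuclideanSpace.equiv (Fin 2) ℝ).symm y))‖
      = Real.sqrt (∑ i, (a i - ahat i) ^ 2) := by
    have : (Dᵀ)⁻¹ *ᵥ ((EuclideanSpace.equiv (Fin 2) ℝ).symm y) = g := hgy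
    rw [this, EuclideanSpace.norm_eq]
    congr 1
    refine Finset.sum_congr rfl fun i _ => ?_
    simp [hg, Real.norm_eq_abs, sq_abs]
  have hyE : ‖((EuclideanSpace.equiv (Fin 2) ℝ).symm y : EuclideanSpace ℝ (Fin 2))‖
      ≤ Real.sqrt 2 * (2 * δ) := by
    rw [EuclideanSpace.norm_eq]
    have : ∑ i, ‖((EuclideanSpace.equiv (Fin 2) ℝ).symm y : EuclideanSpace ℝ (Fin 2)) i‖ ^ 2
        ≤ 2 * (2 * δ) ^ 2 := by
      rw [Fin.sum_univ_two]
      have b0 : ‖y 0‖ ^ 2 ≤ (2 * δ) ^ 2 := by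
        rw [Real.norm_eq_abs]
        exact pow_le_pow_left₀ (abs_nonneg _) hy0 2
      have b1 : ‖y 1‖ ^ 2 ≤ (2 * δ) ^ 2 := by
        rw [Real.norm_eq_abs]
        exact pow_le_pow_left₀ (abs_nonneg _) hy1 2
      have : ((EuclideanSpace.equiv (Fin 2) ℝ).symm y : EuclideanSpace ℝ (Fin 2)) 0 = y 0 := rfl
      calc ‖((EuclideanSpace.equiv (Fin 2) ℝ).symm y : EuclideanSpace ℝ (Fin 2)) 0‖ ^ 2
            + ‖((EuclideanSpace.equiv (Fin 2) ℝ).symm y : EuclideanSpace ℝ (Fin 2)) 1‖ ^ 2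
          = ‖y 0‖ ^ 2 + ‖y 1‖ ^ 2 := rfl
        _ ≤ (2 * δ) ^ 2 + (2 * δ) ^ 2 := add_le_add b0 b1
        _ = 2 * (2 * δ) ^ 2 := by ring
    calc Real.sqrt (∑ i, ‖((EuclideanSpace.equiv (Fin 2) ℝ).symm y : EuclideanSpace ℝ (Fin 2)) i‖ ^ 2)
        ≤ Real.sqrt (2 * (2 * δ) ^ 2) := Real.sqrt_le_sqrt this
      _ = Real.sqrt 2 * (2 * δ) := by
          rw [Real.sqrt_mul (by norm_num), Real.sqrt_sq (by positivity)]
  calc Real.sqrt (∑ i, (a i - ahat i) ^ 2)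
      ≤ ‖(Dᵀ)⁻¹‖ * ‖((EuclideanSpace.equiv (Fin 2) ℝ).symm y : EuclideanSpace ℝ (Fin 2))‖ := by
        rw [← hgE]; exact key
    _ ≤ ‖D⁻¹‖ * (Real.sqrt 2 * (2 * δ)) := by
        rw [hnorm]
        exact mul_le_mul_of_nonneg_left hyE (norm_nonneg _)
    _ = 2 * Real.sqrt 2 * ‖D⁻¹‖ * δ := by ring
end
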